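/- Let r ≥ 1 and let rK₂ denote the graph consisting of r pairwise disjoint edges (2r vertices, r edges). If a finite simple graph G contains no induced subgraph isomorphic to rK₂, then any graph obtained from G by a sequence of vertex identifications also contains no induced subgraph isomorphic to rK₂. -/

import Mathlib

namespace TwoKTwoFree

/-- `rK₂` : the simple graph consisting of `r` pairwise disjoint edges. -/
def matchingGraph (r : ℕ) : SimpleGraph (Fin r × Bool) where
  Adj a b := a.1 = b.1 ∧ a.2 ≠ b.2
  symm := by
    constructor
    rintro a b ⟨h1, h2⟩
    exact ⟨h1.symm, h2.symm⟩
  loopless := by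
    constructor
    rintro a ⟨_, h⟩
    exact h rfl

/-- The graph obtained from `G` by identifying the vertices `u` and `v` into the single
vertex `u` (discarding any loop that arises); the vertex `v` is left behind isolated. -/
def identify {V : Type} (G : SimpleGraph V) (u v : V) : SimpleGraph V where
  Adj a b := a ≠ b ∧ a ≠ v ∧ b ≠ v ∧
    ∃ a' b', G.Adj a' b' ∧ (a' = a ∨ (a' = v ∧ a = u)) ∧ (b' = b ∨ (b' = v ∧ b = u))
  symm := by
    constructor
    rintro a b ⟨hab, hav, hbv, a', b', hadj, ha, hb⟩
    exact ⟨hab.symm, hbv, hav, b', a', hadj.symm, hb, ha⟩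
  loopless := by
    constructor
    rintro a ⟨h, _⟩
    exact h rfl

lemma step_free {V : Type} (r : ℕ) (G : SimpleGraph V) (u v : V)
    (f : matchingGraph r ↪g identify G u v) : Nonempty (matchingGraph r ↪g G) := by
  classical
  have hpartner : ∀ z : Fin r × Bool, (matchingGraph r).Adj z (z.1, !z.2) := by
    intro z; exact ⟨rfl, by simp⟩
  have hnv : ∀ z, f z ≠ v := by
    intro z
    exact (f.map_rel_iff.2 (hpartner z)).2.1
  by_cases hu : ∃ x, f x = u
  · obtain ⟨x, hx⟩ := hu
    set y : Fin r × Bool := (x.1, !x.2) with hy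
    have hxy : x ≠ y := by
      simp [hy, Prod.ext_iff]
    have hfy : f y ≠ u := by
      intro h; exact hxy (f.injective (hx.trans h.symm))
    obtain ⟨hne, hav, hbv, a', b', hG, ha', hb'⟩ := f.map_rel_iff.2 (hpartner x)
    have hb'' : b' = f y := by
      rcases hb' with h | ⟨_, h⟩
      · exact h
      · exact absurd h hfy
    have ha'' : a' = u ∨ a' = v := by
      rcases ha' with h | ⟨h, _⟩
      · exact Or.inl (h.trans hx)
      · exact Or.inr h
    set g : Fin r × Bool → V := fun z => if z = x then a' else f z with hg
    have hrep : ∀ z, g z = f z ∨ (g z = v ∧ f z = u) := by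
      intro z
      by_cases h : z = x
      · subst h
        simp only [hg, if_pos rfl]
        rcases ha' with h | ⟨h1, _⟩
        · exact Or.inl h
        · exact Or.inr ⟨h1, hx⟩
      · simp [hg, h]
    have honly : ∀ z, f z = u → z = x := fun z h => f.injective (h.trans hx.symm)
    have hginj : Function.Injective g := by
      intro z1 z2 h
      by_cases h1 : z1 = x <;> by_cases h2 : z2 = x
      · exact h1.trans h2.symm
      · exfalso
        simp only [hg, if_pos h1, if_neg h2] at h
        rcases ha'' with hw | hw
        · exact h2 (honly z2 (by rw [← h, hw]))
        · exact hnv z2 (by rw [← h, hw])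
      · exfalso
        simp only [hg, if_neg h1, if_pos h2] at h
        rcases ha'' with hw | hw
        · exact h1 (honly z1 (by rw [h, hw]))
        · exact hnv z1 (by rw [h, hw])
      · simp only [hg, if_neg h1, if_neg h2] at h
        exact f.injective h
    refine ⟨⟨⟨g, hginj⟩, ?_⟩⟩
    intro a b
    constructor
    · intro hGab
      have hab : a ≠ b := by rintro rfl; exact hGab.ne rfl
      refine f.map_rel_iff.1 ⟨fun h => hab (f.injective h), hnv a, hnv b, g a, g b, hGab, ?_, ?_⟩
      · rcases hrep a with h | ⟨h1, h2⟩
        · exact Or.inl h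
        · exact Or.inr ⟨h1, h2⟩
      · rcases hrep b with h | ⟨h1, h2⟩
        · exact Or.inl h
        · exact Or.inr ⟨h1, h2⟩
    · intro hM
      have hpart : ∀ z w : Fin r × Bool, (matchingGraph r).Adj z w → w = (z.1, !z.2) := by
        rintro z w ⟨h1, h2⟩
        refine Prod.ext h1.symm ?_
        revert h2; cases hz : z.2 <;> cases hw : w.2 <;> simp
      by_cases hax : a = x
      · have hby : b = y := by rw [hy]; exact hax ▸ hpart a b hM
        subst hax; subst hby
        simpa [hg, if_pos rfl, if_neg hxy.symm, hb''] using hG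
      · by_cases hbx : b = x
        · have hay : a = y := by rw [hy]; exact hbx ▸ hpart b a hM.symm
          subst hbx; subst hay
          have := hG.symm
          simpa [hg, if_neg hxy.symm, if_pos rfl, hb''] using this
        · obtain ⟨hne2, _, _, a2, b2, hG2, ha2, hb2⟩ := f.map_rel_iff.2 hM
          have ha2' : a2 = f a := by
            rcases ha2 with h | ⟨_, h⟩
            · exact h
            · exact absurd (honly a h) hax
          have hb2' : b2 = f b := by
            rcases hb2 with h | ⟨_, h⟩
            · exact h
            · exact absurd (honly b h) hbx
          simpa [hg, if_neg hax, if_neg hbx, ← ha2', ← hb2'] using hG2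
  · push_neg at hu
    refine ⟨⟨⟨f, f.injective⟩, ?_⟩⟩
    intro a b
    constructor
    · intro hGab
      exact f.map_rel_iff.1
        ⟨fun h => hGab.ne h, hnv a, hnv b, f a, f b, hGab, Or.inl rfl, Or.inl rfl⟩
    · intro hM
      obtain ⟨_, _, _, a2, b2, hG2, ha2, hb2⟩ := f.map_rel_iff.2 hM
      have h1 : a2 = f a := by
        rcases ha2 with h | ⟨_, h⟩
        · exact h
        · exact absurd h (hu a)
      have h2 : b2 = f b := by
        rcases hb2 with h | ⟨_, h⟩
        · exact h
        · exact absurd h (hu b)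
      rwa [h1, h2] at hG2

/-- If a finite simple graph `G` contains no induced subgraph
isomorphic to `rK₂` (with `r ≥ 1`), then any graph `G'` obtained from `G` by a sequence
of vertex identifications contains no induced subgraph isomorphic to `rK₂` either. -/
theorem rK2_free_of_identifications {V : Type} [Fintype V] (r : ℕ) (hr : 1 ≤ r)
    (G G' : SimpleGraph V)
    (hfree : ¬ Nonempty (matchingGraph r ↪g G))
    (hseq : Relation.ReflTransGen
      (fun H H' => ∃ u v : V, u ≠ v ∧ H' = identify H u v) G G') :
    ¬ Nonempty (matchingGraph r ↪g G') := by
  induction hseq with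
  | refl => exact hfree
  | tail hsteps hstep ih =>
    obtain ⟨u, v, huv, rfl⟩ := hstep
    rintro ⟨f⟩
    exact ih (step_free r _ u v f)

end TwoKTwoFree
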